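/- A code C is uniquely decipherable if and only if K(C^k) = K(C)^k for all positive integers k. -/

import Mathlib

open Finset Pointwise

instance {A : Type*} [DecidableEq A] : DecidableEq (FreeMonoid A) :=
  inferInstanceAs (DecidableEq (List A))

/-- A code `C` is uniquely decipherable: the concatenation (product) map is
injective on finite sequences of words from `C`. -/
def IsUD {A : Type*} (C : Finset (FreeMonoid A)) : Prop :=
  ∀ l₁ l₂ : List (FreeMonoid A), (∀ w ∈ l₁, w ∈ C) → (∀ w ∈ l₂, w ∈ C) →
    l₁.prod = l₂.prod → l₁ = l₂

/-- The Kraft sum of a code over an alphabet of size `r`. -/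
noncomputable def Kraft {A : Type*} (r : ℕ) (C : Finset (FreeMonoid A)) : ℝ :=
  ∑ x ∈ C, (r : ℝ) ^ (-(x.length : ℤ))

/-- `D` is finer than `C` (refines `C`): every word of `C` is the concatenation
of a nonempty finite sequence of words from `D`. -/
def Refines {A : Type*} (C D : Finset (FreeMonoid A)) : Prop :=
  ∀ w ∈ C, ∃ l : List (FreeMonoid A), l ≠ [] ∧ (∀ v ∈ l, v ∈ D) ∧ l.prod = w

/-- The Kraft weight as a monoid homomorphism. -/
noncomputable def KraftHom {A : Type*} (r : ℕ) (hr : (r : ℝ) ≠ 0) :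
    FreeMonoid A →* ℝ where
  toFun x := (r : ℝ) ^ (-(x.length : ℤ))
  map_one' := by simp
  map_mul' x y := by
    simp only [FreeMonoid.length_mul, ← zpow_add₀ hr]
    push_cast
    ring_nf

lemma KraftHom_pos {A : Type*} {r : ℕ} (hr : 1 ≤ r) (hr' : (r : ℝ) ≠ 0)
    (x : FreeMonoid A) : 0 < KraftHom r hr' x := by
  have : (0 : ℝ) < r := by exact_mod_cast Nat.lt_of_lt_of_le Nat.zero_lt_one hr
  exact zpow_pos this _

lemma pow_eq_image {A : Type*} [DecidableEq A] (C : Finset (FreeMonoid A)) (k : ℕ) :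
    C ^ k = (Fintype.piFinset (fun _ : Fin k => C)).image
      (fun g => (List.ofFn g).prod) := by
  ext w
  simp only [Finset.mem_pow, Finset.mem_image, Fintype.mem_piFinset]
  constructor
  · rintro ⟨f, hf⟩
    exact ⟨fun i => (f i : FreeMonoid A), fun i => (f i).2, hf⟩
  · rintro ⟨g, hg, hw⟩
    exact ⟨fun i => ⟨g i, hg i⟩, hw⟩

lemma sum_KraftHom_pi {A : Type*} [DecidableEq A] {r : ℕ} (hr' : (r : ℝ) ≠ 0)
    (C : Finset (FreeMonoid A)) (k : ℕ) :
    ∑ g ∈ Fintype.piFinset (fun _ : Fin k => C),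
      KraftHom r hr' ((List.ofFn g).prod) = (Kraft r C) ^ k := by
  have h1 : ∀ g : Fin k → FreeMonoid A,
      KraftHom r hr' ((List.ofFn g).prod) = ∏ i, KraftHom r hr' (g i) := by
    intro g
    rw [map_list_prod, List.map_ofFn, List.prod_ofFn]
    rfl
  simp only [h1]
  rw [← Finset.prod_univ_sum]
  have : Kraft r C = ∑ x ∈ C, KraftHom r hr' x := rfl
  rw [this, Finset.prod_const, Finset.card_univ, Fintype.card_fin]

lemma sum_image_le_gen {α β : Type*} [DecidableEq β] (s : Finset α) (g : α → β)
    (F : β → ℝ) (h0 : ∀ b, 0 ≤ F b) :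
    ∑ b ∈ s.image g, F b ≤ ∑ a ∈ s, F (g a) := by
  conv_rhs => rw [Finset.sum_comp F g]
  apply Finset.sum_le_sum
  intro b hb
  obtain ⟨a, ha, rfl⟩ := Finset.mem_image.1 hb
  have h1 : 0 < #{a' ∈ s | g a' = g a} :=
    Finset.card_pos.2 ⟨a, Finset.mem_filter.2 ⟨ha, rfl⟩⟩
  rw [nsmul_eq_mul]
  have h2 : (1:ℝ) ≤ (#{a' ∈ s | g a' = g a} : ℝ) := by exact_mod_cast h1
  nlinarith [h0 (g a)]

/-- Stripping the common prefix of two distinct lists with the same product. -/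
lemma strip {A : Type*} (C : Finset (FreeMonoid A)) (hC : (1 : FreeMonoid A) ∉ C) :
    ∀ (l₁ l₂ : List (FreeMonoid A)), (∀ w ∈ l₁, w ∈ C) → (∀ w ∈ l₂, w ∈ C) →
    l₁.prod = l₂.prod → l₁ ≠ l₂ →
    ∃ u v t₁ t₂ : _, u ≠ v ∧ (∀ w ∈ (u :: t₁ : List (FreeMonoid A)), w ∈ C) ∧
      (∀ w ∈ (v :: t₂ : List (FreeMonoid A)), w ∈ C) ∧
      (u :: t₁ : List (FreeMonoid A)).prod = (v :: t₂).prod := by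
  intro l₁
  induction l₁ with
  | nil =>
    intro l₂ _ h₂ hp hne
    match l₂ with
    | [] => exact absurd rfl hne
    | w :: t =>
      exfalso
      have hw : w.length = 0 := by
        have := congrArg FreeMonoid.length hp
        simp only [List.prod_nil, List.prod_cons, FreeMonoid.length_mul,
          FreeMonoid.length_one] at this
        omega
      have : w = 1 := FreeMonoid.length_eq_zero.1 hw
      exact hC (this ▸ h₂ w List.mem_cons_self)
  | cons u t₁ ih =>
    intro l₂ h₁ h₂ hp hne
    match l₂ with
    | [] =>
      exfalso
      have hw : u.length = 0 := by
        have := congrArg FreeMonoid.length hp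
        simp only [List.prod_nil, List.prod_cons, FreeMonoid.length_mul,
          FreeMonoid.length_one] at this
        omega
      have : u = 1 := FreeMonoid.length_eq_zero.1 hw
      exact hC (this ▸ h₁ u List.mem_cons_self)
    | v :: t₂ =>
      by_cases huv : u = v
      · subst huv
        simp only [List.prod_cons] at hp
        have hp' : t₁.prod = t₂.prod := mul_left_cancel hp
        have hne' : t₁ ≠ t₂ := fun h => hne (by rw [h])
        exact ih t₂ (fun w hw => h₁ w (List.mem_cons_of_mem _ hw))
          (fun w hw => h₂ w (List.mem_cons_of_mem _ hw)) hp' hne'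
      · exact ⟨u, v, t₁, t₂, huv, h₁, h₂, hp⟩

theorem stmt_3 {A : Type*} [Fintype A] [DecidableEq A]
    (hr : 1 ≤ Fintype.card A)
    (C : Finset (FreeMonoid A)) (hC : (1 : FreeMonoid A) ∉ C) :
    IsUD C ↔ ∀ k : ℕ, 1 ≤ k →
      Kraft (Fintype.card A) (C ^ k) = (Kraft (Fintype.card A) C) ^ k := by
  set r := Fintype.card A with hr_def
  have hr' : (r : ℝ) ≠ 0 := by
    have : (0 : ℝ) < r := by exact_mod_cast Nat.lt_of_lt_of_le Nat.zero_lt_one hr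
    exact ne_of_gt this
  have hKraft : ∀ S : Finset (FreeMonoid A),
      Kraft r S = ∑ x ∈ S, KraftHom r hr' x := fun S => rfl
  constructor
  · -- UD → Kraft multiplicative
    intro hUD k _
    rw [hKraft, pow_eq_image, ← sum_KraftHom_pi hr' C k]
    apply Finset.sum_image
    intro g₁ hg₁ g₂ hg₂ heq
    simp only [Finset.mem_coe, Fintype.mem_piFinset] at hg₁ hg₂
    have : List.ofFn g₁ = List.ofFn g₂ := by
      apply hUD
      · intro w hw
        obtain ⟨i, rfl⟩ := List.mem_ofFn.1 hw
        exact hg₁ i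
      · intro w hw
        obtain ⟨i, rfl⟩ := List.mem_ofFn.1 hw
        exact hg₂ i
      · exact heq
    exact List.ofFn_injective this
  · -- Kraft multiplicative → UD
    intro H
    intro l₁ l₂ h₁ h₂ hp
    by_contra hne
    obtain ⟨u, v, t₁, t₂, huv, hu, hv, hprod⟩ := strip C hC l₁ l₂ h₁ h₂ hp hne
    set a : List (FreeMonoid A) := u :: t₁ with ha
    set b : List (FreeMonoid A) := v :: t₂ with hb
    set m₁ : List (FreeMonoid A) := a ++ b with hm₁
    set m₂ : List (FreeMonoid A) := b ++ a with hm₂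
    set k := m₁.length with hk
    have hlen : m₂.length = k := by
      simp only [hm₁, hm₂, hk, List.length_append]; omega
    have hkpos : 1 ≤ k := by
      simp only [hk, hm₁, ha, List.length_append, List.length_cons]; omega
    -- the two distinct tuples
    set g₁ : Fin k → FreeMonoid A := fun i => m₁.get i with hg₁def
    set g₂ : Fin k → FreeMonoid A := fun i => m₂.get (Fin.cast hlen.symm i) with hg₂def
    have hofn₁ : List.ofFn g₁ = m₁ := List.ofFn_get m₁
    have hofn₂ : List.ofFn g₂ = m₂ := by
      apply List.ext_getElem (by simp only [List.length_ofFn, hlen])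
      intro n hn1 hn2
      rw [List.getElem_ofFn]
      rfl
    have hg₁mem : g₁ ∈ Fintype.piFinset (fun _ : Fin k => C) := by
      rw [Fintype.mem_piFinset]
      intro i
      have : g₁ i ∈ m₁ := List.get_mem m₁ i
      rcases List.mem_append.1 this with h | h
      · exact hu _ h
      · exact hv _ h
    have hg₂mem : g₂ ∈ Fintype.piFinset (fun _ : Fin k => C) := by
      rw [Fintype.mem_piFinset]
      intro i
      have : g₂ i ∈ m₂ := List.get_mem m₂ _
      rcases List.mem_append.1 this with h | h
      · exact hv _ h
      · exact hu _ h
    have hgne : g₁ ≠ g₂ := by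
      intro h
      have h0 : g₁ ⟨0, hkpos⟩ = g₂ ⟨0, hkpos⟩ := by rw [h]
      have e1 : g₁ ⟨0, hkpos⟩ = u := rfl
      have e2 : g₂ ⟨0, hkpos⟩ = v := rfl
      exact huv (e1 ▸ e2 ▸ h0)
    have hgprod : (List.ofFn g₁).prod = (List.ofFn g₂).prod := by
      rw [hofn₁, hofn₂]
      show (a ++ b).prod = (b ++ a).prod
      rw [List.prod_append, List.prod_append, hprod]
    -- strict inequality
    set D := Fintype.piFinset (fun _ : Fin k => C) with hD
    set P : (Fin k → FreeMonoid A) → FreeMonoid A := fun g => (List.ofFn g).prod with hP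
    have himg : D.image P = (D.erase g₂).image P := by
      apply Finset.Subset.antisymm
      · intro w hw
        obtain ⟨g, hg, rfl⟩ := Finset.mem_image.1 hw
        by_cases hgg : g = g₂
        · subst hgg
          exact Finset.mem_image.2 ⟨g₁, Finset.mem_erase.2 ⟨hgne, hg₁mem⟩, hgprod⟩
        · exact Finset.mem_image.2 ⟨g, Finset.mem_erase.2 ⟨hgg, hg⟩, rfl⟩
      · exact Finset.image_subset_image (Finset.erase_subset _ _)
    have hlt : Kraft r (C ^ k) < (Kraft r C) ^ k := by
      rw [hKraft, pow_eq_image, ← sum_KraftHom_pi hr' C k, ← hD, ← hP]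
      calc ∑ w ∈ D.image P, KraftHom r hr' w
          = ∑ w ∈ (D.erase g₂).image P, KraftHom r hr' w := by rw [himg]
        _ ≤ ∑ g ∈ D.erase g₂, KraftHom r hr' (P g) := by
            exact sum_image_le_gen _ _ _ (fun w => (KraftHom_pos hr hr' w).le)
        _ < ∑ g ∈ D, KraftHom r hr' (P g) := by
            apply Finset.sum_lt_sum_of_subset (Finset.erase_subset _ _) hg₂mem
              (Finset.notMem_erase _ _) (KraftHom_pos hr hr' _)
            intro g _ _
            exact (KraftHom_pos hr hr' _).le
    exact absurd (H k hkpos) (ne_of_lt hlt)
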